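/- Let Ω = { (ξ, η) ∈ ℝ² : 0 ≤ ξ ≤ 2 and |η| ≤ 1 + ξ/2 } be a trapezoid. Then the function x ↦ infdist(x, Ωᶜ), the distance from x to the complement of Ω, attains its maximum value 1, and the set of its maximizers (the set of max-min points of Ω) is exactly the vertical segment { (1, η) : |η| ≤ 3/2 − √5/2 }. -/

import Mathlib

/-- The trapezoid `Ω = {(ξ, η) : 0 ≤ ξ ≤ 2, |η| ≤ 1 + ξ/2}` in the Euclidean plane. -/
def trapezoid : Set (EuclideanSpace ℝ (Fin 2)) :=
  {x | 0 ≤ x 0 ∧ x 0 ≤ 2 ∧ |x 1| ≤ 1 + x 0 / 2}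

noncomputable def pt (a b : ℝ) : EuclideanSpace ℝ (Fin 2) := WithLp.toLp 2 ![a, b]

@[simp] lemma pt0 (a b : ℝ) : pt a b 0 = a := rfl
@[simp] lemma pt1 (a b : ℝ) : pt a b 1 = b := rfl

lemma dist_two (x y : EuclideanSpace ℝ (Fin 2)) :
    dist x y = Real.sqrt ((x 0 - y 0)^2 + (x 1 - y 1)^2) := by
  rw [EuclideanSpace.dist_eq, Fin.sum_univ_two]
  simp [Real.dist_eq, sq_abs]

lemma infDist_le' {x : EuclideanSpace ℝ (Fin 2)} {s : Set (EuclideanSpace ℝ (Fin 2))} {d : ℝ}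
    (h : ∀ ε > (0:ℝ), ∃ y ∈ s, dist x y ≤ d + ε) : Metric.infDist x s ≤ d := by
  refine le_of_forall_pos_le_add fun ε hε => ?_
  obtain ⟨y, hy, hd⟩ := h ε hε
  exact (Metric.infDist_le_dist_of_mem hy).trans hd

lemma sqrt5_sq : Real.sqrt 5 ^ 2 = 5 := Real.sq_sqrt (by norm_num)
lemma sqrt5_pos : 0 < Real.sqrt 5 := Real.sqrt_pos.mpr (by norm_num)

lemma ub_left {x : EuclideanSpace ℝ (Fin 2)} (hx : x ∈ trapezoid) :
    Metric.infDist x trapezoidᶜ ≤ x 0 := by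
  apply infDist_le'
  intro ε hε
  refine ⟨pt (-ε) (x 1), ?_, ?_⟩
  · simp only [Set.mem_compl_iff, trapezoid, Set.mem_setOf_eq, pt0, pt1]
    intro h; linarith [h.1]
  · rw [dist_two]; simp only [pt0, pt1, sub_self]
    rw [show (x 0 - -ε)^2 + (0:ℝ)^2 = (x 0 + ε)^2 by ring]
    rw [Real.sqrt_sq (by linarith [hx.1])]

lemma ub_right {x : EuclideanSpace ℝ (Fin 2)} (hx : x ∈ trapezoid) :
    Metric.infDist x trapezoidᶜ ≤ 2 - x 0 := by
  apply infDist_le'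
  intro ε hε
  refine ⟨pt (2 + ε) (x 1), ?_, ?_⟩
  · simp only [Set.mem_compl_iff, trapezoid, Set.mem_setOf_eq, pt0, pt1]
    intro h; linarith [h.2.1]
  · rw [dist_two]; simp only [pt0, pt1, sub_self]
    rw [show (x 0 - (2 + ε))^2 + (0:ℝ)^2 = ((2 - x 0) + ε)^2 by ring]
    rw [Real.sqrt_sq (by linarith [hx.2.1])]

lemma ub_top {x : EuclideanSpace ℝ (Fin 2)} (hx : x ∈ trapezoid) :
    Metric.infDist x trapezoidᶜ ≤ (1 + x 0 / 2 - x 1) * (2 * Real.sqrt 5 / 5) := by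
  have hs2 : Real.sqrt 5 ^ 2 = 5 := sqrt5_sq
  have hs0 : 0 < Real.sqrt 5 := sqrt5_pos
  set s : ℝ := Real.sqrt 5
  have h1 : x 1 ≤ 1 + x 0 / 2 := (abs_le.mp hx.2.2).2
  have hd0 : 0 ≤ (1 + x 0 / 2 - x 1) * (2 * s / 5) :=
    mul_nonneg (by linarith) (by positivity)
  apply infDist_le'
  intro ε hε
  set c : ℝ := (1 + x 0 / 2 - x 1) * (2 * s / 5) + ε with hc
  have hc0 : 0 < c := by rw [hc]; linarith
  refine ⟨pt (x 0 - c * s / 5) (x 1 + 2 * c * s / 5), ?_, ?_⟩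
  · simp only [Set.mem_compl_iff, trapezoid, Set.mem_setOf_eq, pt0, pt1]
    intro h
    have h2 := (abs_le.mp h.2.2).2
    have key : x 1 + 2 * c * s / 5 - (1 + (x 0 - c * s / 5) / 2) = ε * s / 2 := by
      rw [hc]; linear_combination ((1 + x 0 / 2 - x 1) / 5) * hs2
    nlinarith [mul_pos hε hs0]
  · rw [dist_two]; simp only [pt0, pt1]
    have key : (x 0 - (x 0 - c * s / 5))^2 + (x 1 - (x 1 + 2 * c * s / 5))^2 = c^2 := by
      linear_combination (c^2 / 5) * hs2
    rw [key, Real.sqrt_sq hc0.le]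

lemma ub_bot {x : EuclideanSpace ℝ (Fin 2)} (hx : x ∈ trapezoid) :
    Metric.infDist x trapezoidᶜ ≤ (1 + x 0 / 2 + x 1) * (2 * Real.sqrt 5 / 5) := by
  have hs2 : Real.sqrt 5 ^ 2 = 5 := sqrt5_sq
  have hs0 : 0 < Real.sqrt 5 := sqrt5_pos
  set s : ℝ := Real.sqrt 5
  have h1 : -(1 + x 0 / 2) ≤ x 1 := (abs_le.mp hx.2.2).1
  have hd0 : 0 ≤ (1 + x 0 / 2 + x 1) * (2 * s / 5) :=
    mul_nonneg (by linarith) (by positivity)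
  apply infDist_le'
  intro ε hε
  set c : ℝ := (1 + x 0 / 2 + x 1) * (2 * s / 5) + ε with hc
  have hc0 : 0 < c := by rw [hc]; linarith
  refine ⟨pt (x 0 - c * s / 5) (x 1 - 2 * c * s / 5), ?_, ?_⟩
  · simp only [Set.mem_compl_iff, trapezoid, Set.mem_setOf_eq, pt0, pt1]
    intro h
    have h2 := (abs_le.mp h.2.2).1
    have key : -(1 + (x 0 - c * s / 5) / 2) - (x 1 - 2 * c * s / 5) = ε * s / 2 := by
      rw [hc]; linear_combination ((1 + x 0 / 2 + x 1) / 5) * hs2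
    nlinarith [mul_pos hε hs0]
  · rw [dist_two]; simp only [pt0, pt1]
    have key : (x 0 - (x 0 - c * s / 5))^2 + (x 1 - (x 1 - 2 * c * s / 5))^2 = c^2 := by
      linear_combination (c^2 / 5) * hs2
    rw [key, Real.sqrt_sq hc0.le]

lemma lb {x : EuclideanSpace ℝ (Fin 2)} (h0 : x 0 = 1)
    (h1 : |x 1| ≤ 3 / 2 - Real.sqrt 5 / 2) :
    ∀ y ∈ trapezoidᶜ, 1 ≤ dist x y := by
  have hs2 := sqrt5_sq
  have hs0 := sqrt5_pos
  have hsgt : 2 < Real.sqrt 5 := by nlinarith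
  obtain ⟨hx1l, hx1r⟩ := abs_le.mp h1
  intro y hy
  rw [dist_two, h0]
  suffices h : 1 ≤ (1 - y 0)^2 + (x 1 - y 1)^2 by
    calc (1:ℝ) = Real.sqrt 1 := Real.sqrt_one.symm
    _ ≤ _ := Real.sqrt_le_sqrt h
  simp only [Set.mem_compl_iff, trapezoid, Set.mem_setOf_eq, not_and_or, not_le] at hy
  rcases lt_or_ge (y 0) 0 with hy0 | hy0
  · nlinarith [sq_nonneg (x 1 - y 1)]
  rcases lt_or_ge 2 (y 0) with hy2 | hy2
  · nlinarith [sq_nonneg (x 1 - y 1)]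
  have hy1 : 1 + y 0 / 2 < |y 1| := by
    rcases hy with h | h | h
    · linarith
    · linarith
    · exact h
  rcases le_or_gt 0 (y 1) with hsgn | hsgn
  · rw [abs_of_nonneg hsgn] at hy1
    have h3 : y 0 / 2 + (Real.sqrt 5 - 1) / 2 ≤ y 1 - x 1 := by linarith
    have h4 : (0:ℝ) ≤ y 0 / 2 + (Real.sqrt 5 - 1) / 2 := by linarith
    have h5 : (y 0 / 2 + (Real.sqrt 5 - 1) / 2)^2 ≤ (y 1 - x 1)^2 := by nlinarith
    nlinarith [sq_nonneg (5 * y 0 - 5 + Real.sqrt 5)]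
  · rw [abs_of_neg hsgn] at hy1
    have h3 : y 0 / 2 + (Real.sqrt 5 - 1) / 2 ≤ x 1 - y 1 := by linarith
    have h4 : (0:ℝ) ≤ y 0 / 2 + (Real.sqrt 5 - 1) / 2 := by linarith
    have h5 : (y 0 / 2 + (Real.sqrt 5 - 1) / 2)^2 ≤ (x 1 - y 1)^2 := by nlinarith
    nlinarith [sq_nonneg (5 * y 0 - 5 + Real.sqrt 5)]

/-- For the trapezoid `Ω = {(ξ, η) : 0 ≤ ξ ≤ 2, |η| ≤ 1 + ξ/2}`, the function
`x ↦ infdist(x, Ωᶜ)` attains its maximum value `1`, and the set of its maximizers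
is exactly the segment `{(1, η) : |η| ≤ 3/2 − √5/2}`. -/
theorem stmt_9 :
    (∀ x : EuclideanSpace ℝ (Fin 2), Metric.infDist x trapezoidᶜ ≤ 1) ∧
    {x : EuclideanSpace ℝ (Fin 2) | Metric.infDist x trapezoidᶜ = 1} =
      {x : EuclideanSpace ℝ (Fin 2) | x 0 = 1 ∧ |x 1| ≤ 3 / 2 - Real.sqrt 5 / 2} := by
  have hs2 := sqrt5_sq
  have hs0 := sqrt5_pos
  have part1 : ∀ x : EuclideanSpace ℝ (Fin 2), Metric.infDist x trapezoidᶜ ≤ 1 := by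
    intro x
    by_cases hx : x ∈ trapezoid
    · rcases le_total (x 0) 1 with h | h
      · exact (ub_left hx).trans h
      · exact (ub_right hx).trans (by linarith)
    · rw [Metric.infDist_zero_of_mem (show x ∈ trapezoidᶜ from hx)]
      norm_num
  refine ⟨part1, ?_⟩
  ext x
  simp only [Set.mem_setOf_eq]
  constructor
  · intro h
    have hx : x ∈ trapezoid := by
      by_contra hc
      rw [Metric.infDist_zero_of_mem (show x ∈ trapezoidᶜ from hc)] at h
      norm_num at h
    have e1 := ub_left hx
    have e2 := ub_right hx
    have e3 := ub_top hx
    have e4 := ub_bot hx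
    rw [h] at e1 e2 e3 e4
    have h0 : x 0 = 1 := le_antisymm (by linarith) e1
    rw [h0] at e3 e4
    refine ⟨h0, abs_le.mpr ⟨?_, ?_⟩⟩
    · nlinarith [e4]
    · nlinarith [e3]
  · rintro ⟨h0, h1⟩
    have hx : x ∈ trapezoid := by
      refine ⟨by rw [h0]; norm_num, by rw [h0]; norm_num, ?_⟩
      rw [h0]; linarith
    refine le_antisymm (part1 x) ?_
    have hne : trapezoidᶜ.Nonempty := by
      refine ⟨pt (-1) 0, ?_⟩
      simp only [Set.mem_compl_iff, trapezoid, Set.mem_setOf_eq, pt0, pt1]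
      intro hcon
      linarith [hcon.1]
    rw [← not_lt]
    intro hlt
    obtain ⟨y, hy, hd⟩ := (Metric.infDist_lt_iff hne).mp hlt
    exact absurd hd (not_lt.mpr (lb h0 h1 y hy))
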